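/- There exist ε₀ ∈ (0, 1) and C > 0 such that for every ε ∈ (0, ε₀) there exists u₃ ∈ (−1/2, 1/2) with |u₃| ≤ C·ε such that both partial derivatives ∂H̄⁰/∂θ and ∂H̄⁰/∂u vanish at (θ, u) = (π, u₃). (This equilibrium of the averaged co-orbital problem approximates the Lagrange point L₃ within an accuracy O(ε).) -/

import Mathlib

open Real

/-- The reduced averaged Hamiltonian of the 1:1 mean-motion resonance of the
circular-planar restricted three-body problem at zero eccentricity:
`H̄⁰(θ,u) = -(1-ε)/(2(1+u)²) - u + ε(cos θ - ((1+u)⁴ + 1 - 2(1+u)²cos θ)^{-1/2})`. -/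
noncomputable def Hbar (ε θ u : ℝ) : ℝ :=
  -(1 - ε) / (2 * (1 + u) ^ 2) - u +
    ε * (cos θ - 1 / Real.sqrt ((1 + u) ^ 4 + 1 - 2 * (1 + u) ^ 2 * cos θ))

/-- The `u`-derivative of `Hbar ε π u`. -/
noncomputable def Fder (ε u : ℝ) : ℝ :=
  (1 - ε) / (1 + u) ^ 3 - 1 + 2 * ε * (1 + u) / ((1 + u) ^ 2 + 1) ^ 2

lemma Hbar_pi (ε u : ℝ) :
    Hbar ε π u = -(1 - ε) / (2 * (1 + u) ^ 2) - u +
      ε * (-1 - 1 / ((1 + u) ^ 2 + 1)) := by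
  unfold Hbar
  rw [Real.cos_pi]
  have h : (1 + u) ^ 4 + 1 - 2 * (1 + u) ^ 2 * (-1) = ((1 + u) ^ 2 + 1) ^ 2 := by ring
  rw [h, Real.sqrt_sq (by positivity)]

lemma hasDerivAt_u (ε u : ℝ) (hu : 1 + u ≠ 0) :
    HasDerivAt (fun u => Hbar ε π u) (Fder ε u) u := by
  have hQ : (1 + u) ^ 2 + 1 ≠ 0 := by positivity
  have h1 : HasDerivAt (fun v : ℝ => 1 + v) 1 u := (hasDerivAt_id u).const_add 1
  have hden : HasDerivAt (fun v : ℝ => 2 * (1 + v) ^ 2) (2 * (2 * (1 + u) ^ 1 * 1)) u :=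
    (h1.pow 2).const_mul 2
  have hp1 : HasDerivAt (fun v : ℝ => -(1 - ε) / (2 * (1 + v) ^ 2))
      ((0 * (2 * (1 + u) ^ 2) - -(1 - ε) * (2 * (2 * (1 + u) ^ 1 * 1))) /
        (2 * (1 + u) ^ 2) ^ 2) u :=
    (hasDerivAt_const u (-(1 - ε))).div hden (by positivity)
  have hQd : HasDerivAt (fun v : ℝ => (1 + v) ^ 2 + 1) (2 * (1 + u) ^ 1 * 1) u :=
    (h1.pow 2).add_const 1
  have hp3 : HasDerivAt (fun v : ℝ => 1 / ((1 + v) ^ 2 + 1))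
      ((0 * ((1 + u) ^ 2 + 1) - 1 * (2 * (1 + u) ^ 1 * 1)) / ((1 + u) ^ 2 + 1) ^ 2) u :=
    (hasDerivAt_const u 1).div hQd hQ
  have hfull := ((hp1.sub (hasDerivAt_id u)).add
    (((hasDerivAt_const u (-1 : ℝ)).sub hp3).const_mul ε))
  have heq : (fun v => Hbar ε π v) =
      fun v => -(1 - ε) / (2 * (1 + v) ^ 2) - v + ε * (-1 - 1 / ((1 + v) ^ 2 + 1)) := by
    funext v; exact Hbar_pi ε v
  rw [heq]
  refine hfull.congr_deriv ?_
  unfold Fder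
  field_simp
  ring

lemma F_zero (ε : ℝ) : Fder ε 0 = -ε / 2 := by
  unfold Fder
  norm_num
  ring

lemma F_neg_eps (ε : ℝ) (h0 : 0 < ε) (h1 : ε < 1) : 0 < Fder ε (-ε) := by
  unfold Fder
  have ha : (0:ℝ) < 1 - ε := by linarith
  have h2 : (1 - ε) / (1 + -ε) ^ 3 - 1 = (1 - (1 - ε) ^ 2) / (1 - ε) ^ 2 := by
    have : (1:ℝ) + -ε = 1 - ε := by ring
    rw [this]
    field_simp
  rw [h2]
  have hpos1 : 0 < (1 - (1 - ε) ^ 2) / (1 - ε) ^ 2 := by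
    apply div_pos _ (by positivity)
    nlinarith
  have hpos2 : 0 < 2 * ε * (1 + -ε) / ((1 + -ε) ^ 2 + 1) ^ 2 := by
    apply div_pos _ (by positivity)
    nlinarith
  linarith

/-- Approximation of the Lagrange point `L₃` by an equilibrium of the averaged
co-orbital problem: for small `ε` there is an equilibrium `(π, u₃)` of `H̄⁰` with
`|u₃| ≤ Cε`. -/
theorem L3_equilibrium_of_averaged :
    ∃ ε₀ ∈ Set.Ioo (0 : ℝ) 1, ∃ C > (0 : ℝ), ∀ ε ∈ Set.Ioo (0 : ℝ) ε₀,
      ∃ u₃ ∈ Set.Ioo (-(1 / 2) : ℝ) (1 / 2), |u₃| ≤ C * ε ∧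
        HasDerivAt (fun θ => Hbar ε θ u₃) 0 π ∧
        HasDerivAt (fun u => Hbar ε π u) 0 u₃ := by
  refine ⟨1/2, ⟨by norm_num, by norm_num⟩, 1, by norm_num, ?_⟩
  rintro ε ⟨hε0, hε12⟩
  -- IVT for Fder ε on [-ε, 0]
  have hcont : ContinuousOn (Fder ε) (Set.Icc (-ε) 0) := by
    apply ContinuousOn.add
    · apply ContinuousOn.sub _ continuousOn_const
      apply ContinuousOn.div continuousOn_const (by fun_prop)
      intro x hx
      have : 1 + x > 0 := by have := hx.1; linarith
      positivity
    · apply ContinuousOn.div (by fun_prop) (by fun_prop)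
      intro x hx
      positivity
  have hmem : (0:ℝ) ∈ Set.Icc (Fder ε 0) (Fder ε (-ε)) := by
    constructor
    · rw [F_zero]; linarith
    · exact (F_neg_eps ε hε0 (by linarith)).le
  obtain ⟨u₃, hu₃mem, hu₃0⟩ :=
    intermediate_value_Icc' (by linarith : -ε ≤ (0:ℝ)) hcont hmem
  obtain ⟨hl, hr⟩ := hu₃mem
  have hu₃lt : u₃ ∈ Set.Ioo (-(1/2) : ℝ) (1/2) := by
    constructor <;> [linarith; linarith]
  have habs : |u₃| ≤ 1 * ε := by
    rw [abs_le, one_mul]; constructor <;> linarith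
  have hune : (1:ℝ) + u₃ ≠ 0 := by intro h; rw [← eq_neg_iff_add_eq_zero] at h; linarith
  refine ⟨u₃, hu₃lt, habs, ?_, ?_⟩
  · -- θ derivative
    have hupos : (0:ℝ) < 1 + u₃ := by linarith
    have hgval : (1 + u₃) ^ 4 + 1 - 2 * (1 + u₃) ^ 2 * Real.cos π
        = ((1 + u₃) ^ 2 + 1) ^ 2 := by
      rw [Real.cos_pi]; ring
    have hgpos : (0:ℝ) < (1 + u₃) ^ 4 + 1 - 2 * (1 + u₃) ^ 2 * Real.cos π := by
      rw [hgval]; positivity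
    have hg : HasDerivAt (fun θ => (1 + u₃) ^ 4 + 1 - 2 * (1 + u₃) ^ 2 * Real.cos θ)
        (-(2 * (1 + u₃) ^ 2 * -Real.sin π)) π :=
      ((Real.hasDerivAt_cos π).const_mul (2 * (1 + u₃) ^ 2)).const_sub
        ((1 + u₃) ^ 4 + 1)
    have hsqrt := hg.sqrt (ne_of_gt hgpos)
    have hsqrtpos : (0:ℝ) < Real.sqrt ((1 + u₃) ^ 4 + 1 - 2 * (1 + u₃) ^ 2 * Real.cos π) :=
      Real.sqrt_pos.mpr hgpos
    have hinv := (hasDerivAt_const π (1:ℝ)).div hsqrt (ne_of_gt hsqrtpos)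
    have hfull := (hasDerivAt_const π (-(1 - ε) / (2 * (1 + u₃) ^ 2) - u₃)).add
      (((Real.hasDerivAt_cos π).sub hinv).const_mul ε)
    have heq : (fun θ => Hbar ε θ u₃) = fun θ =>
        (-(1 - ε) / (2 * (1 + u₃) ^ 2) - u₃) +
          ε * (Real.cos θ - 1 / Real.sqrt ((1 + u₃) ^ 4 + 1 - 2 * (1 + u₃) ^ 2 * Real.cos θ)) := by
      funext θ; unfold Hbar; ring
    rw [heq]
    refine hfull.congr_deriv ?_
    simp [Real.sin_pi]
  · exact hu₃0 ▸ hasDerivAt_u ε u₃ (by linarith)
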